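/- Monotonicity of node-level CFH in the neighbor distance: for every a ∈ (0, 1) and every C > 0, the function f : [0, ∞) → ℝ defined by f(K) = ((a − 1)K + C) / max(aK + C, K) is strictly decreasing. (Here K plays the role of the mean neighbor distance d(v_i, N_i), a = |N_i| / (|V| − 1), and aK + C plays the role of the homophily baseline b(v_i) when the class-controlled features of all non-neighbors of v_i are fixed, so that h̃^(v)_i = f(d(v_i, N_i)) is monotonically decreasing in d(v_i, N_i).) -/
import Mathlib


/-- Lemma 3.3, monotonicity of node-level CFH in the neighbor distance.
For every `a ∈ (0, 1)` and every `C > 0`, the function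
`K ↦ ((a - 1) * K + C) / max (a * K + C) K` is strictly decreasing on `[0, ∞)`.
Here `K` plays the role of the mean neighbor distance `d(v_i, N_i)`,
`a = |N_i| / (|V| - 1)`, and `a * K + C` is the homophily baseline `b(v_i)` when the
class-controlled features of all non-neighbors of `v_i` are fixed, so that the normalized
node-level CFH `h̃^(v)_i` is a monotonically decreasing function of `d(v_i, N_i)`. -/
theorem node_level_CFH_monotone (a C : ℝ) (ha : a ∈ Set.Ioo (0 : ℝ) 1) (hC : 0 < C) :
    StrictAntiOn (fun K : ℝ => ((a - 1) * K + C) / max (a * K + C) K) (Set.Ici 0) := by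
  obtain ⟨ha0, ha1⟩ := ha
  intro x hx y hy hxy
  simp only [Set.mem_Ici] at hx hy
  have hdx : 0 < a * x + C := by nlinarith
  have hdy : 0 < a * y + C := by nlinarith
  simp only
  rcases le_total y (a * y + C) with h2 | h2
  · -- both in the small region
    have h1 : x ≤ a * x + C := by nlinarith
    rw [max_eq_left h1, max_eq_left h2]
    rw [div_lt_div_iff₀ hdy hdx]
    nlinarith
  · rcases le_total (a * x + C) x with h1 | h1
    · -- both in the large region
      have hx0 : 0 < x := by nlinarith
      have hy0 : 0 < y := by nlinarith
      rw [max_eq_right h1, max_eq_right h2]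
      rw [div_lt_div_iff₀ hy0 hx0]
      nlinarith
    · -- mixed region
      have hy0 : 0 < y := by nlinarith
      rw [max_eq_left h1, max_eq_right h2]
      rcases lt_or_ge ((1 - a) * x) C with h3 | h3
      · have hfy : ((a - 1) * y + C) / y ≤ 0 :=
          div_nonpos_of_nonpos_of_nonneg (by nlinarith) hy0.le
        have hfx : 0 < ((a - 1) * x + C) / (a * x + C) :=
          div_pos (by nlinarith) hdx
        linarith
      · have h4 : C < (1 - a) * y := by nlinarith
        have hfy : ((a - 1) * y + C) / y < 0 :=
          div_neg_of_neg_of_pos (by nlinarith) hy0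
        have hfx : 0 ≤ ((a - 1) * x + C) / (a * x + C) :=
          div_nonneg (by nlinarith) hdx.le
        linarith
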